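/- If G is a graph, X and Y are subsets of its vertex set with nonempty intersection, and both induced subgraphs G[X] and G[Y] contain m edge-disjoint spanning trees (i.e., are m-tree-connected), then the induced subgraph G[X ∪ Y] is also m-tree-connected. -/

import Mathlib

open SimpleGraph

def IsTreeConn {V : Type*} (m : ℕ) (G : SimpleGraph V) : Prop :=
  ∃ T : Fin m → SimpleGraph V, (∀ i, T i ≤ G) ∧ (∀ i, (T i).IsTree) ∧
    ∀ i j, i ≠ j → Disjoint (T i).edgeSet (T j).edgeSet

noncomputable def eIn {V : Type*} (G : SimpleGraph V) (S : Set V) : ℕ :=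
  {e ∈ G.edgeSet | ∀ v ∈ e, v ∈ S}.ncard

def IsSparse {V : Type*} (m : ℕ) (G : SimpleGraph V) : Prop :=
  ∀ S : Set V, S.Nonempty → (eIn G S : ℤ) ≤ m * S.ncard - m

def mComp {V : Type*} (m : ℕ) (G : SimpleGraph V) (v : V) : Set V :=
  ⋃₀ {X : Set V | v ∈ X ∧ IsTreeConn m (G.induce X)}

noncomputable def crossE {V : Type*} (m : ℕ) (G : SimpleGraph V) : ℕ :=
  {e ∈ G.edgeSet | ∃ u ∈ e, ∃ w ∈ e, mComp m G u ≠ mComp m G w}.ncard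

noncomputable def Omega {V : Type*} (m : ℕ) (G : SimpleGraph V) : ℤ :=
  m * (Set.range (mComp m G)).ncard - crossE m G


/-- Transfer reachability along a relation: if every `G`-edge has `H`-reachable
endpoints, then `G`-reachable vertices are `H`-reachable. -/
lemma reach_trans_aux {V : Type*} {G H : SimpleGraph V}
    (h : ∀ a b, G.Adj a b → H.Reachable a b) {u v : V} (hr : G.Reachable u v) :
    H.Reachable u v := by
  obtain ⟨p⟩ := hr
  induction p with
  | nil => exact Reachable.refl _
  | cons h' _ ih => exact (h _ _ h').trans ih

/-- Every finite connected graph contains a spanning tree. -/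
lemma exists_isTree_le {V : Type*} [Finite V] {H : SimpleGraph V} (h : H.Connected) :
    ∃ T ≤ H, T.IsTree := by
  classical
  suffices main : ∀ n (H : SimpleGraph V), H.edgeSet.ncard = n → H.Connected →
      ∃ T ≤ H, T.IsTree from main _ H rfl h
  intro n
  induction n using Nat.strong_induction_on with
  | _ n ih =>
  intro H hcard hconn
  by_cases hac : H.IsAcyclic
  · exact ⟨H, le_refl _, ⟨hconn, hac⟩⟩
  · rw [isAcyclic_iff_forall_adj_isBridge] at hac
    push_neg at hac
    obtain ⟨v, w, hadj, hnb⟩ := hac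
    set H' : SimpleGraph V := H \ fromEdgeSet {s(v, w)} with hH'
    have hreach : H'.Reachable v w := by
      by_contra hcon
      exact hnb (isBridge_iff.mpr hcon)
    have hedge : H'.edgeSet = H.edgeSet \ {s(v, w)} := by
      simp [hH', edgeSet_sdiff, edgeSet_fromEdgeSet, edgeSet_sdiff_sdiff_isDiag]
    have hlt : H'.edgeSet.ncard < n := by
      rw [← hcard, hedge]
      exact Set.ncard_diff_singleton_lt_of_mem (H.mem_edgeSet.mpr hadj) (Set.toFinite _)
    have hstep : ∀ a b, H.Adj a b → H'.Reachable a b := by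
      intro a b hab
      by_cases he : s(a, b) = s(v, w)
      · rw [Sym2.eq_iff] at he
        rcases he with ⟨rfl, rfl⟩ | ⟨rfl, rfl⟩
        · exact hreach
        · exact hreach.symm
      · refine Adj.reachable ?_
        rw [hH', sdiff_adj]
        refine ⟨hab, ?_⟩
        rw [fromEdgeSet_adj]
        rintro ⟨hmem, -⟩
        exact he (Set.mem_singleton_iff.mp hmem)
    have hconn' : H'.Connected := by
      have : Nonempty V := hconn.nonempty
      exact ⟨fun a b => reach_trans_aux hstep (hconn.preconnected a b)⟩
    obtain ⟨T, hTle, hTtree⟩ := ih _ hlt H' rfl hconn'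
    exact ⟨T, hTle.trans sdiff_le, hTtree⟩
theorem stmt0 {V : Type*} [Fintype V] (m : ℕ) (hm : 0 < m) (G : SimpleGraph V)
    (X Y : Set V) (hXY : (X ∩ Y).Nonempty)
    (hX : IsTreeConn m (G.induce X)) (hY : IsTreeConn m (G.induce Y)) :
    IsTreeConn m (G.induce (X ∪ Y)) := by
  classical
  obtain ⟨T, hTle, hTtree, hTdisj⟩ := hX
  obtain ⟨S, hSle, hStree, hSdisj⟩ := hY
  obtain ⟨z, hzX, hzY⟩ := hXY
  set W := ↥(X ∪ Y)
  have hXU : X ⊆ X ∪ Y := Set.subset_union_left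
  have hYU : Y ⊆ X ∪ Y := Set.subset_union_right
  let eX : ↥X ↪ W := ⟨Set.inclusion hXU, Set.inclusion_injective hXU⟩
  let eY : ↥Y ↪ W := ⟨Set.inclusion hYU, Set.inclusion_injective hYU⟩
  let T' : Fin m → SimpleGraph W := fun i => (T i).map eX
  let S' : Fin m → SimpleGraph W := fun i => (S i).map eY
  let F : Fin m → SimpleGraph W := fun i => T' i ⊔ (S' i \ (⨆ j, T' j))
  -- basic facts about T' and S'
  have hT'le : ∀ i, T' i ≤ G.induce (X ∪ Y) := by
    rintro i u v ⟨-, a, b, hab, rfl, rfl⟩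
    exact hTle i hab
  have hS'le : ∀ i, S' i ≤ G.induce (X ∪ Y) := by
    rintro i u v ⟨-, a, b, hab, rfl, rfl⟩
    exact hSle i hab
  have hFle : ∀ i, F i ≤ G.induce (X ∪ Y) := fun i =>
    sup_le (hT'le i) ((sdiff_le).trans (hS'le i))
  -- membership of endpoints of T' edges in X
  have hT'X : ∀ i (u v : W), (T' i).Adj u v → (↑u : V) ∈ X ∧ (↑v : V) ∈ X := by
    rintro i u v ⟨-, a, b, hab, rfl, rfl⟩
    exact ⟨a.2, b.2⟩
  -- reachability within X inside F i
  have hreachX : ∀ i (u v : W), (↑u : V) ∈ X → (↑v : V) ∈ X → (F i).Reachable u v := by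
    intro i u v hu hv
    have h1 : (T i).Reachable ⟨↑u, hu⟩ ⟨↑v, hv⟩ :=
      (hTtree i).isConnected.preconnected _ _
    let hom : T i →g F i :=
      ⟨eX, fun h => (le_sup_left : T' i ≤ F i) ⟨eX.injective.ne h.ne, _, _, h, rfl, rfl⟩⟩
    have h2 := h1.map hom
    have hu' : hom ⟨↑u, hu⟩ = u := rfl
    have hv' : hom ⟨↑v, hv⟩ = v := rfl
    rwa [hu', hv'] at h2
  -- every vertex of Y is F i-reachable to z
  let zW : W := ⟨z, Or.inl hzX⟩
  have hreachY : ∀ i (v : W), (↑v : V) ∈ Y → (F i).Reachable v zW := by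
    intro i v hv
    have h1 : (S i).Reachable ⟨↑v, hv⟩ ⟨z, hzY⟩ :=
      (hStree i).isConnected.preconnected _ _
    let hom : S i →g S' i := ⟨eY, fun h => ⟨eY.injective.ne h.ne, _, _, h, rfl, rfl⟩⟩
    have h2 := h1.map hom
    have hstep : ∀ a b : W, (S' i).Adj a b → (F i).Reachable a b := by
      intro a b hab
      by_cases hT : (⨆ j, T' j).Adj a b
      · obtain ⟨j, hj⟩ := iSup_adj.mp hT
        obtain ⟨ha, hb⟩ := hT'X j a b hj
        exact hreachX i a b ha hb
      · exact Adj.reachable (sup_adj _ _ _ _ |>.mpr (Or.inr ((sdiff_adj _ _ _ _).mpr ⟨hab, hT⟩)))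
    have h3 : (F i).Reachable (hom ⟨↑v, hv⟩) (hom ⟨z, hzY⟩) := reach_trans_aux hstep h2
    have hv' : hom ⟨↑v, hv⟩ = v := rfl
    have hz' : hom ⟨z, hzY⟩ = zW := rfl
    rwa [hv', hz'] at h3
  -- F i is connected
  have hFconn : ∀ i, (F i).Connected := by
    intro i
    have hto : ∀ v : W, (F i).Reachable v zW := by
      intro v
      rcases v.2 with hvX | hvY
      · exact hreachX i v zW hvX hzX
      · exact hreachY i v hvY
    have : Nonempty W := ⟨zW⟩
    exact ⟨fun a b => (hto a).trans (hto b).symm⟩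
  -- F i's are pairwise edge-disjoint
  have hFdisj : ∀ i j, i ≠ j → Disjoint (F i).edgeSet (F j).edgeSet := by
    intro i j hij
    rw [Set.disjoint_left]
    intro e hei hej
    induction e with
    | _ a b =>
    rw [mem_edgeSet] at hei hej
    have hTT : ∀ k l, k ≠ l → ¬((T' k).Adj a b ∧ (T' l).Adj a b) := by
      rintro k l hkl ⟨⟨-, a₀, b₀, h₀, ha₀, hb₀⟩, ⟨-, a₁, b₁, h₁, ha₁, hb₁⟩⟩
      have ea : a₁ = a₀ := eX.injective (ha₁.trans ha₀.symm)
      have eb : b₁ = b₀ := eX.injective (hb₁.trans hb₀.symm)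
      subst ea; subst eb
      exact Set.disjoint_left.mp (hTdisj k l hkl) ((T k).mem_edgeSet.mpr h₀) ((T l).mem_edgeSet.mpr h₁)
    have hSS : ∀ k l, k ≠ l → ¬((S' k).Adj a b ∧ (S' l).Adj a b) := by
      rintro k l hkl ⟨⟨-, a₀, b₀, h₀, ha₀, hb₀⟩, ⟨-, a₁, b₁, h₁, ha₁, hb₁⟩⟩
      have ea : a₁ = a₀ := eY.injective (ha₁.trans ha₀.symm)
      have eb : b₁ = b₀ := eY.injective (hb₁.trans hb₀.symm)
      subst ea; subst eb
      exact Set.disjoint_left.mp (hSdisj k l hkl) ((S k).mem_edgeSet.mpr h₀) ((S l).mem_edgeSet.mpr h₁)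
    rcases (sup_adj _ _ _ _).mp hei with hi | hi <;>
      rcases (sup_adj _ _ _ _).mp hej with hj | hj
    · exact hTT i j hij ⟨hi, hj⟩
    · exact ((sdiff_adj _ _ _ _).mp hj).2 (iSup_adj.mpr ⟨i, hi⟩)
    · exact ((sdiff_adj _ _ _ _).mp hi).2 (iSup_adj.mpr ⟨j, hj⟩)
    · exact hSS i j hij ⟨((sdiff_adj _ _ _ _).mp hi).1, ((sdiff_adj _ _ _ _).mp hj).1⟩
  -- extract spanning trees
  have hWfin : Finite W := Finite.Set.finite_union X Y
  choose U hUle hUtree using fun i => exists_isTree_le (hFconn i)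
  refine ⟨U, fun i => (hUle i).trans (hFle i), hUtree, fun i j hij => ?_⟩
  exact (hFdisj i j hij).mono (edgeSet_mono (hUle i)) (edgeSet_mono (hUle j))
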